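/- Let 𝒞 ⊂ ℝ be a Cantor set with thickness τ(𝒞) > 0. Then the Hausdorff dimension of 𝒞 satisfies dim_H(𝒞) ≥ log 2 / log(2 + 1/τ(𝒞)). -/

import Mathlib

open Set
open scoped NNReal ENNReal MeasureTheory

/-- The gaps of a Cantor set `C ⊂ ℝ`: the connected components of `I ∖ C`, where
`I = [inf C, sup C]` is the convex hull of `C`. -/
noncomputable def gapSet (C : Set ℝ) : Set (Set ℝ) :=
  {U | ∃ x ∈ Icc (sInf C) (sSup C) \ C,
        U = connectedComponentIn (Icc (sInf C) (sSup C) \ C) x}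

section Auxiliary


lemma aux_deriv {d c : ℝ} (hc : 0 < c) {t : ℝ} (ht : 0 < t) :
    HasDerivAt (fun u : ℝ => (u ^ d + c) ^ (1/d))
      ((1/d) * (t ^ d + c) ^ (1/d - 1) * (d * t ^ (d - 1))) t := by
  have h1 : HasDerivAt (fun u : ℝ => u ^ d + c) (d * t ^ (d-1)) t := by
    simpa using (Real.hasDerivAt_rpow_const (p := d) (Or.inl (ne_of_gt ht))).add_const c
  have h2 : HasDerivAt (fun u : ℝ => u ^ (1/d)) ((1/d) * (t ^ d + c) ^ (1/d - 1)) (t ^ d + c) := by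
    have h3 : (0:ℝ) < t ^ d := Real.rpow_pos_of_pos ht d
    have : (t:ℝ) ^ d + c ≠ 0 := by positivity
    simpa [mul_comm] using Real.hasDerivAt_rpow_const (x := t ^ d + c) (p := 1/d) (Or.inl this)
  exact h2.comp t h1

lemma aux_deriv_eq {d c : ℝ} (hd0 : 0 < d) (hc : 0 < c) {t : ℝ} (ht : 0 < t) :
    deriv (fun u : ℝ => (u ^ d + c) ^ (1/d)) t
      = ((t ^ d + c) / t ^ d) ^ ((1-d)/d) := by
  have hD := (aux_deriv (d := d) hc ht).deriv
  rw [hD]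
  have h3 : (0:ℝ) < t ^ d := Real.rpow_pos_of_pos ht d
  have h4 : (0:ℝ) < t ^ d + c := by positivity
  have e1 : (1:ℝ)/d * (t ^ d + c) ^ (1/d-1) * (d * t ^ (d-1))
      = (t ^ d + c) ^ ((1-d)/d) * t ^ (d-1) := by
    rw [show (1:ℝ)/d - 1 = (1-d)/d by field_simp]
    field_simp
  have e2 : t ^ (d-1) = ((t ^ d) ^ ((1-d)/d))⁻¹ := by
    rw [← Real.rpow_mul ht.le]
    rw [show d * ((1-d)/d) = 1 - d by field_simp]
    rw [← Real.rpow_neg ht.le]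
    norm_num
  rw [e1, Real.div_rpow h4.le h3.le, e2]
  exact (div_eq_mul_inv _ _).symm

lemma aux_concave {d c : ℝ} (hd0 : 0 < d) (hd1 : d < 1) (hc : 0 < c) :
    ConcaveOn ℝ (Ici (0:ℝ)) (fun u : ℝ => (u ^ d + c) ^ (1/d)) := by
  have hint : interior (Ici (0:ℝ)) = Ioi 0 := interior_Ici
  apply AntitoneOn.concaveOn_of_deriv (convex_Ici 0)
  · apply ContinuousOn.rpow_const
    · exact (ContinuousOn.rpow_const continuousOn_id (fun x _ => Or.inr hd0.le)).add
        continuousOn_const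
    · intro x hx
      left
      have h0 : (0:ℝ) ≤ x ^ d := Real.rpow_nonneg hx d
      exact ne_of_gt (by linarith)
  · rw [hint]
    intro t ht
    exact ((aux_deriv (d := d) hc ht).differentiableAt).differentiableWithinAt
  · rw [hint]
    intro t₁ h₁ t₂ h₂ h12
    rw [aux_deriv_eq hd0 hc h₁, aux_deriv_eq hd0 hc h₂]
    have e1 : ∀ t : ℝ, 0 < t → (t ^ d + c) / t ^ d = 1 + c / t ^ d := by
      intro t ht
      have h3 : (0:ℝ) < t ^ d := Real.rpow_pos_of_pos ht d
      field_simp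
    rw [e1 _ h₁, e1 _ h₂]
    have h3 : (0:ℝ) < t₁ ^ d := Real.rpow_pos_of_pos h₁ d
    have h4 : (0:ℝ) < t₂ ^ d := Real.rpow_pos_of_pos h₂ d
    have h5 : t₁ ^ d ≤ t₂ ^ d := Real.rpow_le_rpow h₁.le h12 hd0.le
    have h6 : (0:ℝ) < c / t₂ ^ d := div_pos hc h4
    have h7 : (0:ℝ) < c / t₁ ^ d := div_pos hc h3
    exact Real.rpow_le_rpow (by linarith) (by gcongr) (div_nonneg (by linarith) hd0.le)

/-- The key "reverse Minkowski"-type inequality. -/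
lemma key_ineq {d τ : ℝ} (hτ : 0 < τ) (hd : d = Real.log 2 / Real.log (2 + 1/τ))
    {x y g : ℝ} (hg : 0 ≤ g) (hx : τ * g ≤ x) (hy : τ * g ≤ y)
    (hx0 : 0 ≤ x) (hy0 : 0 ≤ y) :
    (x + g + y) ^ d ≤ x ^ d + y ^ d := by
  have hτ1 : (0:ℝ) < 1/τ := by positivity
  have h2 : (1:ℝ) < 2 + 1/τ := by linarith
  have hlog2 : (0:ℝ) < Real.log 2 := Real.log_pos (by norm_num)
  have hlogτ : (0:ℝ) < Real.log (2 + 1/τ) := Real.log_pos h2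
  have hd0 : 0 < d := by rw [hd]; positivity
  have hd1 : d < 1 := by
    rw [hd, div_lt_one hlogτ]
    exact Real.log_lt_log (by norm_num) (by linarith)
  have hpow : (2:ℝ) ^ (1/d) = 2 + 1/τ := by
    rw [hd, Real.rpow_def_of_pos (by norm_num : (0:ℝ) < 2)]
    rw [one_div_div, mul_comm, div_mul_cancel₀ _ (ne_of_gt hlog2), Real.exp_log (by linarith)]
  -- reduce to the case x ≤ y
  clear hd
  revert x y hx hy hx0 hy0
  suffices H : ∀ x y : ℝ, x ≤ y → τ * g ≤ x → τ * g ≤ y → 0 ≤ x → 0 ≤ y →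
      (x + g + y) ^ d ≤ x ^ d + y ^ d by
    intro x y hx hy hx0 hy0
    rcases le_total x y with h | h
    · exact H x y h hx hy hx0 hy0
    · have := H y x h hy hx hy0 hx0
      calc (x + g + y) ^ d = (y + g + x) ^ d := by ring_nf
        _ ≤ y ^ d + x ^ d := this
        _ = x ^ d + y ^ d := by ring
  intro x y hxy hx hy hx0 hy0
  rcases eq_or_lt_of_le hy0 with hy' | hy'
  · -- y = 0, hence x = 0 and g = 0
    have hx' : x = 0 := le_antisymm (hxy.trans hy'.symm.le) hx0
    have hg' : g = 0 := by nlinarith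
    simp [hx', hg', ← hy', Real.zero_rpow (ne_of_gt hd0)]
  · set c : ℝ := y ^ d with hc_def
    have hc : 0 < c := Real.rpow_pos_of_pos hy' d
    have hconc := aux_concave hd0 hd1 hc
    have hb0 : 0 ≤ x / y := div_nonneg hx0 hy'.le
    have ha0 : 0 ≤ 1 - x / y := by
      have : x / y ≤ 1 := (div_le_one hy').mpr hxy
      linarith
    have hab : (1 - x / y) + x / y = 1 := by ring
    have hchord := hconc.2 (self_mem_Ici) (mem_Ici.mpr hy0) ha0 hb0 hab
    simp only [smul_eq_mul, mul_zero, zero_add] at hchord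
    have hF0 : ((0:ℝ) ^ d + c) ^ (1/d) = y := by
      rw [Real.zero_rpow (ne_of_gt hd0), zero_add, hc_def, ← Real.rpow_mul hy'.le,
        mul_one_div_cancel (ne_of_gt hd0), Real.rpow_one]
    have hFy : (y ^ d + c) ^ (1/d) = (2 + 1/τ) * y := by
      rw [hc_def, show y ^ d + y ^ d = 2 * y ^ d by ring,
        Real.mul_rpow (by norm_num) (Real.rpow_nonneg hy'.le d), hpow,
        ← Real.rpow_mul hy'.le, mul_one_div_cancel (ne_of_gt hd0), Real.rpow_one]
    rw [hF0, hFy] at hchord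
    have hxval : (x / y) * y = x := div_mul_cancel₀ x (ne_of_gt hy')
    rw [hxval] at hchord
    have hstep : x + g + y ≤ (x ^ d + c) ^ (1/d) := by
      have hgx : g ≤ x / τ := by
        rw [le_div_iff₀ hτ]; linarith [hx]
      have he : (1 - x/y) * y + (x/y) * ((2 + 1/τ) * y) = x + x/τ + y := by
        field_simp
        ring
      rw [he] at hchord
      linarith
    calc (x + g + y) ^ d ≤ ((x ^ d + c) ^ (1/d)) ^ d := by
          apply Real.rpow_le_rpow (by linarith) hstep hd0.le
      _ = x ^ d + c := by
          rw [← Real.rpow_mul (by positivity), one_div_mul_cancel (ne_of_gt hd0), Real.rpow_one]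
      _ = x ^ d + y ^ d := by rw [hc_def]


lemma rpow_subadd {p x y : ℝ} (hp : 0 ≤ p) (hp1 : p ≤ 1) (hx : 0 ≤ x) (hy : 0 ≤ y) :
    (x + y) ^ p ≤ x ^ p + y ^ p := by
  lift x to ℝ≥0 using hx
  lift y to ℝ≥0 using hy
  have := NNReal.rpow_add_le_add_rpow x y hp hp1
  exact_mod_cast this

section FSsetup

variable {C : Set ℝ} {a b τ s : ℝ} {gp gq : ℕ → ℝ}

/-- If a gap meets the open interval `(α,β)` with `α β ∈ C`, it is contained in it. -/
lemma gap_in (hgapC : ∀ k, Ioo (gp k) (gq k) ∩ C = ∅) {i : ℕ} {α β : ℝ}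
    (hα : α ∈ C) (hβ : β ∈ C) (hne : (Ioo (gp i) (gq i) ∩ Ioo α β).Nonempty) :
    α ≤ gp i ∧ gq i ≤ β := by
  obtain ⟨z, hz1, hz2⟩ := hne
  constructor
  · by_contra h
    push_neg at h
    have : α ∈ Ioo (gp i) (gq i) ∩ C := ⟨⟨h, lt_trans hz2.1 hz1.2⟩, hα⟩
    simp [hgapC i] at this
  · by_contra h
    push_neg at h
    have : β ∈ Ioo (gp i) (gq i) ∩ C := ⟨⟨lt_trans hz1.1 hz2.2, h⟩, hβ⟩
    simp [hgapC i] at this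

/-- A nonempty open interval inside `[a,b]` avoiding `C` is inside a single gap. -/
lemma free_gap (hpC : ∀ k, gp k ∈ C) (hqC : ∀ k, gq k ∈ C)
    (hcov : ∀ x ∈ Icc a b, x ∉ C → ∃ k, x ∈ Ioo (gp k) (gq k))
    {x y : ℝ} (hxy : x < y) (hax : a ≤ x) (hyb : y ≤ b) (hfree : Ioo x y ∩ C = ∅) :
    ∃ i, gp i ≤ x ∧ y ≤ gq i := by
  have hzmem : (x + y) / 2 ∈ Ioo x y := ⟨by linarith, by linarith⟩
  have hznC : (x + y) / 2 ∉ C := by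
    intro hz; have : (x+y)/2 ∈ Ioo x y ∩ C := ⟨hzmem, hz⟩; simp [hfree] at this
  obtain ⟨i, hi⟩ := hcov ((x+y)/2) ⟨by linarith [hzmem.1], by linarith [hzmem.2]⟩ hznC
  refine ⟨i, ?_, ?_⟩
  · by_contra h
    push_neg at h
    have : gp i ∈ Ioo x y ∩ C := ⟨⟨h, lt_of_le_of_lt (by linarith [hi.1]) hzmem.2⟩, hpC i⟩
    simp [hfree] at this
  · by_contra h
    push_neg at h
    have : gq i ∈ Ioo x y ∩ C := ⟨⟨lt_of_lt_of_le hzmem.1 (by linarith [hi.2]), h⟩, hqC i⟩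
    simp [hfree] at this

/-- Base case of the induction: empty intersection with the region. -/
lemma FSbase (hτ : 0 < τ) (hs0 : 0 < s) (hs1 : s ≤ 1)
    (key : ∀ x y g : ℝ, 0 ≤ g → τ * g ≤ x → τ * g ≤ y → (x + g + y) ^ s ≤ x ^ s + y ^ s)
    (hgap : ∀ k, gp k < gq k)
    (hgapC : ∀ k, Ioo (gp k) (gq k) ∩ C = ∅)
    (hpC : ∀ k, gp k ∈ C) (hqC : ∀ k, gq k ∈ C)
    (hcov : ∀ x ∈ Icc a b, x ∉ C → ∃ k, x ∈ Ioo (gp k) (gq k))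
    (HL : ∀ t : ℕ, ∀ α : ℝ, (α = a ∨ ∃ i ≤ t, α = gq i) → α ≤ gp t →
      τ * (gq t - gp t) ≤ gp t - α)
    (HR : ∀ t : ℕ, ∀ β : ℝ, (β = b ∨ ∃ i ≤ t, β = gp i) → gq t ≤ β →
      τ * (gq t - gp t) ≤ β - gq t)
    {j : ℕ} {α β ℓ m : ℝ}
    (haα : a ≤ α) (hβb : β ≤ b) (hαC : α ∈ C) (hβC : β ∈ C) (hαβ : α ≤ β)
    (hℓ : 0 ≤ ℓ) (hm : 0 ≤ m)
    (hblockL : α = a ∨ ∃ i < j, α = gq i) (hblockR : β = b ∨ ∃ i < j, β = gp i)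
    (hinv : ∀ i < j, Ioo (gp i) (gq i) ∩ Ioo (α + ℓ) (β - m) = ∅)
    (hempty : C ∩ Ioo (α + ℓ) (β - m) = ∅) :
    (β - α) ^ s ≤ ℓ ^ s + m ^ s := by
  rcases le_or_gt (β - m) (α + ℓ) with hreg | hreg
  · -- the region is empty
    calc (β - α) ^ s ≤ (ℓ + m) ^ s :=
          Real.rpow_le_rpow (by linarith) (by linarith) hs0.le
      _ ≤ ℓ ^ s + m ^ s := rpow_subadd hs0.le hs1 hℓ hm
  · -- the region is inside one gap
    have hfree : Ioo (α + ℓ) (β - m) ∩ C = ∅ := by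
      rw [inter_comm]; exact hempty
    obtain ⟨i, hi1, hi2⟩ := free_gap hpC hqC hcov hreg (by linarith) (by linarith) hfree
    -- the gap meets the region, hence i ≥ j; it also lies inside (α, β)
    have hmeet : (Ioo (gp i) (gq i) ∩ Ioo (α + ℓ) (β - m)).Nonempty := by
      refine ⟨(α + ℓ + (β - m)) / 2, ⟨?_, ?_⟩, ⟨?_, ?_⟩⟩ <;> [skip; skip; skip; skip] <;>
        first
          | (apply lt_of_le_of_lt hi1; linarith)
          | (apply lt_of_lt_of_le _ hi2; linarith)
          | linarith
    have hij : j ≤ i := by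
      by_contra h
      push_neg at h
      have := hinv i h
      rw [this] at hmeet
      exact (Set.not_nonempty_empty) hmeet
    have hsub : α ≤ gp i ∧ gq i ≤ β := by
      apply gap_in hgapC hαC hβC
      obtain ⟨z, hz1, hz2⟩ := hmeet
      exact ⟨z, hz1, by constructor <;> [linarith [hz2.1]; linarith [hz2.2]]⟩
    have hx : τ * (gq i - gp i) ≤ gp i - α := by
      apply HL i α _ hsub.1
      rcases hblockL with h | ⟨i', hi', h⟩
      · exact Or.inl h
      · exact Or.inr ⟨i', by omega, h⟩
    have hy : τ * (gq i - gp i) ≤ β - gq i := by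
      apply HR i β _ hsub.2
      rcases hblockR with h | ⟨i', hi', h⟩
      · exact Or.inl h
      · exact Or.inr ⟨i', by omega, h⟩
    have hkey := key (gp i - α) (β - gq i) (gq i - gp i) (by linarith [hgap i]) hx hy
    have heq : β - α = (gp i - α) + (gq i - gp i) + (β - gq i) := by ring
    rw [heq]
    refine hkey.trans (add_le_add ?_ ?_)
    · exact Real.rpow_le_rpow (by nlinarith [hgap i]) (by linarith) hs0.le
    · exact Real.rpow_le_rpow (by nlinarith [hgap i]) (by linarith) hs0.le
end FSsetup

lemma ioo_inter_nonempty {x1 x2 y1 y2 : ℝ} (h1 : x1 < x2) (h2 : y1 < y2) (h3 : y1 < x2)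
    (h4 : x1 < y2) : (Ioo x1 x2 ∩ Ioo y1 y2).Nonempty := by
  have h5 : max x1 y1 < min x2 y2 := by
    rcases max_cases x1 y1 with ⟨h6, _⟩ | ⟨h6, _⟩ <;> rw [h6] <;> exact lt_min (by linarith) (by linarith)
  refine ⟨(max x1 y1 + min x2 y2) / 2, ⟨?_, ?_⟩, ?_, ?_⟩
  · have := le_max_left x1 y1; linarith
  · have := min_le_left x2 y2; linarith
  · have := le_max_right x1 y1; linarith
  · have := min_le_right x2 y2; linarith

section FSsection
variable {C : Set ℝ} {a b τ s : ℝ} {gp gq : ℕ → ℝ}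

/-- The main induction. -/
lemma FS (hτ : 0 < τ) (hs0 : 0 < s) (hs1 : s ≤ 1)
    (key : ∀ x y g : ℝ, 0 ≤ g → τ * g ≤ x → τ * g ≤ y → (x + g + y) ^ s ≤ x ^ s + y ^ s)
    (hgap : ∀ k, gp k < gq k)
    (hgapC : ∀ k, Ioo (gp k) (gq k) ∩ C = ∅)
    (hpC : ∀ k, gp k ∈ C) (hqC : ∀ k, gq k ∈ C)
    (hcov : ∀ x ∈ Icc a b, x ∉ C → ∃ k, x ∈ Ioo (gp k) (gq k))
    (hnoC : ∀ x y : ℝ, x < y → a ≤ x → y ≤ b → ∃ z, z ∈ Ioo x y ∧ z ∉ C)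
    (HL : ∀ t : ℕ, ∀ α : ℝ, (α = a ∨ ∃ i ≤ t, α = gq i) → α ≤ gp t →
      τ * (gq t - gp t) ≤ gp t - α)
    (HR : ∀ t : ℕ, ∀ β : ℝ, (β = b ∨ ∃ i ≤ t, β = gp i) → gq t ≤ β →
      τ * (gq t - gp t) ≤ β - gq t) :
    ∀ N : ℕ, ∀ L : Finset (ℝ × ℝ), ∀ j : ℕ, ∀ α β ℓ m : ℝ,
    3 * L.card + (if 0 < ℓ then 1 else 0) + (if 0 < m then 1 else 0) ≤ N →
    a ≤ α → β ≤ b → α ∈ C → β ∈ C → α ≤ β → 0 ≤ ℓ → 0 ≤ m →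
    (α = a ∨ ∃ i < j, α = gq i) → (β = b ∨ ∃ i < j, β = gp i) →
    (∀ i < j, Ioo (gp i) (gq i) ∩ Ioo (α + ℓ) (β - m) = ∅) →
    (∀ v ∈ L, v.1 < v.2) →
    (C ∩ Ioo (α + ℓ) (β - m) ⊆ ⋃ v ∈ L, Ioo v.1 v.2) →
    (β - α) ^ s ≤ 2 * (∑ v ∈ L, (v.2 - v.1) ^ s) + ℓ ^ s + m ^ s := by
  have base := fun {j : ℕ} {α β ℓ m : ℝ} =>
    FSbase (C := C) (a := a) (b := b) (τ := τ) (s := s) (gp := gp) (gq := gq)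
      (j := j) (α := α) (β := β) (ℓ := ℓ) (m := m) hτ hs0 hs1 key hgap hgapC hpC hqC hcov HL HR
  intro N
  induction N with
  | zero =>
    intro L j α β ℓ m hN haα hβb hαC hβC hαβ hℓ hm hbL hbR hinv hLgood hLcov
    have hc0 : L.card = 0 := by omega
    rw [Finset.card_eq_zero] at hc0
    subst hc0
    simp only [Finset.sum_empty, mul_zero, zero_add]
    have hempty : C ∩ Ioo (α + ℓ) (β - m) = ∅ := by
      rw [← subset_empty_iff]
      intro x hx
      simpa using hLcov hx
    exact base haα hβb hαC hβC hαβ hℓ hm hbL hbR hinv hempty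
  | succ N ih =>
    intro L j α β ℓ m hN haα hβb hαC hβC hαβ hℓ hm hbL hbR hinv hLgood hLcov
    have hsum_nonneg : ∀ M : Finset (ℝ × ℝ), M ⊆ L → 0 ≤ ∑ v ∈ M, (v.2 - v.1) ^ s :=
      fun M hM => Finset.sum_nonneg fun v hv =>
        Real.rpow_nonneg (by linarith [hLgood v (hM hv)]) s
    by_cases hCreg : C ∩ Ioo (α + ℓ) (β - m) = ∅
    · have h1 := base haα hβb hαC hβC hαβ hℓ hm hbL hbR hinv hCreg
      have h2 := hsum_nonneg L (subset_refl L)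
      linarith
    · -- main case
      obtain ⟨w, hwC, hwreg⟩ := Set.nonempty_iff_ne_empty.mpr hCreg
      have hreg : α + ℓ < β - m := lt_trans hwreg.1 hwreg.2
      classical
      have hex : ∃ i : ℕ, (α ≤ gp i ∧ gq i ≤ β) ∧ α + ℓ < gq i ∧ gp i < β - m := by
        obtain ⟨z, hz, hzC⟩ := hnoC (α + ℓ) (β - m) hreg (by linarith) (by linarith)
        obtain ⟨i, hi⟩ := hcov z ⟨by linarith [hz.1], by linarith [hz.2]⟩ hzC
        have hsub := gap_in hgapC hαC hβC
          ⟨z, hi, by constructor <;> [linarith [hz.1]; linarith [hz.2]]⟩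
        exact ⟨i, hsub, by linarith [hi.2, hz.1], by linarith [hi.1, hz.2]⟩
      set k := Nat.find hex with hk_def
      obtain ⟨⟨hαp, hqβ⟩, hql, hpm⟩ : (α ≤ gp k ∧ gq k ≤ β) ∧ α + ℓ < gq k ∧ gp k < β - m :=
        Nat.find_spec hex
      have hmin : ∀ i, ((α ≤ gp i ∧ gq i ≤ β) ∧ α + ℓ < gq i ∧ gp i < β - m) → k ≤ i :=
        fun i hi => Nat.find_min' hex hi
      have hg0 : 0 < gq k - gp k := by linarith [hgap k]
      have hτg : 0 < τ * (gq k - gp k) := mul_pos hτ hg0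
      have hjk : j ≤ k := by
        by_contra h
        push_neg at h
        have h2 := hinv k h
        have h3 : (Ioo (gp k) (gq k) ∩ Ioo (α + ℓ) (β - m)).Nonempty :=
          ioo_inter_nonempty (hgap k) hreg hql hpm
        rw [h2] at h3
        exact Set.not_nonempty_empty h3
      have hbLk : α = a ∨ ∃ i ≤ k, α = gq i := by
        rcases hbL with h | ⟨i, hi, h⟩
        · exact Or.inl h
        · exact Or.inr ⟨i, by omega, h⟩
      have hbRk : β = b ∨ ∃ i ≤ k, β = gp i := by
        rcases hbR with h | ⟨i, hi, h⟩
        · exact Or.inl h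
        · exact Or.inr ⟨i, by omega, h⟩
      have hP : τ * (gq k - gp k) ≤ gp k - α := HL k α hbLk hαp
      have hQ : τ * (gq k - gp k) ≤ β - gq k := HR k β hbRk hqβ
      have hαp' : α < gp k := by linarith
      have hqβ' : gq k < β := by linarith
      have hkey : (β - α) ^ s ≤ (gp k - α) ^ s + (β - gq k) ^ s := by
        have h1 := key (gp k - α) (β - gq k) (gq k - gp k) hg0.le hP hQ
        calc (β - α) ^ s = ((gp k - α) + (gq k - gp k) + (β - gq k)) ^ s := by ring_nf
          _ ≤ _ := h1
      -- new block facts for the children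
      have hbLL : α = a ∨ ∃ i < k + 1, α = gq i := by
        rcases hbLk with h | ⟨i, hi, h⟩
        · exact Or.inl h
        · exact Or.inr ⟨i, by omega, h⟩
      have hbRR : β = b ∨ ∃ i < k + 1, β = gp i := by
        rcases hbRk with h | ⟨i, hi, h⟩
        · exact Or.inl h
        · exact Or.inr ⟨i, by omega, h⟩
      have hbLq : (gq k = a ∨ ∃ i < k + 1, gq k = gq i) := Or.inr ⟨k, Nat.lt_succ_self k, rfl⟩
      have hbRp : (gp k = b ∨ ∃ i < k + 1, gp k = gp i) := Or.inr ⟨k, Nat.lt_succ_self k, rfl⟩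
      -- invariant helpers for children
      have hinvL : ∀ m' : ℝ, 0 ≤ m' → ∀ i, i < k + 1 →
          Ioo (gp i) (gq i) ∩ Ioo (α + ℓ) (gp k - m') = ∅ := by
        intro m' hm' i hik
        by_contra h
        obtain ⟨z, hz1, hz2⟩ := Set.nonempty_iff_ne_empty.mpr h
        have hzk : z < gp k := by linarith [hz2.2]
        have hsub : α ≤ gp i ∧ gq i ≤ β :=
          gap_in hgapC hαC hβC ⟨z, hz1, by constructor <;> [linarith [hz2.1]; linarith]⟩
        have hik' : k ≤ i := hmin i ⟨hsub, by linarith [hz1.2, hz2.1], by linarith [hz1.1]⟩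
        have hieq : i = k := by omega
        rw [hieq] at hz1
        linarith [hz1.1]
      have hinvR : ∀ ℓ' : ℝ, 0 ≤ ℓ' → ∀ i, i < k + 1 →
          Ioo (gp i) (gq i) ∩ Ioo (gq k + ℓ') (β - m) = ∅ := by
        intro ℓ' hℓ' i hik
        by_contra h
        obtain ⟨z, hz1, hz2⟩ := Set.nonempty_iff_ne_empty.mpr h
        have hzk : gq k < z := by linarith [hz2.1]
        have hsub : α ≤ gp i ∧ gq i ≤ β :=
          gap_in hgapC hαC hβC ⟨z, hz1, by constructor <;> [linarith; linarith [hz2.2]]⟩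
        have hik' : k ≤ i := hmin i ⟨hsub, by linarith [hz1.2], by linarith [hz1.1, hz2.2]⟩
        have hieq : i = k := by omega
        rw [hieq] at hz1
        linarith [hz1.2]
      -- adjacency (no empty zone can touch the chosen gap)
      have hadjR : gq k < β - m → (C ∩ Ioo (gq k) (β - m)).Nonempty := by
        intro hlt
        by_contra h
        rw [Set.not_nonempty_iff_eq_empty] at h
        have hfree : Ioo (gq k) (β - m) ∩ C = ∅ := by rw [inter_comm]; exact h
        obtain ⟨i, hi1, hi2⟩ := free_gap hpC hqC hcov hlt (by linarith) (by linarith) hfree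
        have hpi : gp i = gq k := by
          rcases lt_or_ge (gp i) (gq k) with h' | h'
          · exfalso
            have hmem : gq k ∈ Ioo (gp i) (gq i) ∩ C := ⟨⟨h', by linarith⟩, hqC k⟩
            rw [hgapC i] at hmem
            exact hmem
          · linarith
        have hsub : α ≤ gp i ∧ gq i ≤ β := by
          apply gap_in hgapC hαC hβC
          apply ioo_inter_nonempty (hgap i) (show α < β by linarith)
          · linarith [hgap i]
          · linarith
        have hik : k ≤ i := hmin i ⟨hsub, by linarith [hgap i], by linarith⟩
        have hik' : k < i := by
          rcases eq_or_lt_of_le hik with h' | h'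
          · exfalso; rw [← h'] at hpi; linarith [hgap k]
          · exact h'
        have hHL := HL i (gq k) (Or.inr ⟨k, hik'.le, rfl⟩) (le_of_eq hpi.symm)
        have := mul_pos hτ (show (0:ℝ) < gq i - gp i by linarith [hgap i])
        linarith [hpi]
      have hadjL : α + ℓ < gp k → (C ∩ Ioo (α + ℓ) (gp k)).Nonempty := by
        intro hlt
        by_contra h
        rw [Set.not_nonempty_iff_eq_empty] at h
        have hfree : Ioo (α + ℓ) (gp k) ∩ C = ∅ := by rw [inter_comm]; exact h
        obtain ⟨i, hi1, hi2⟩ := free_gap hpC hqC hcov hlt (by linarith) (by linarith) hfree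
        have hqi : gq i = gp k := by
          rcases lt_or_ge (gp k) (gq i) with h' | h'
          · exfalso
            have hmem : gp k ∈ Ioo (gp i) (gq i) ∩ C := ⟨⟨by linarith, h'⟩, hpC k⟩
            rw [hgapC i] at hmem
            exact hmem
          · linarith
        have hsub : α ≤ gp i ∧ gq i ≤ β := by
          apply gap_in hgapC hαC hβC
          apply ioo_inter_nonempty (hgap i) (show α < β by linarith)
          · linarith [hgap i]
          · linarith [hgap i]
        have hik : k ≤ i := hmin i ⟨hsub, by linarith, by linarith [hgap i]⟩
        have hik' : k < i := by
          rcases eq_or_lt_of_le hik with h' | h'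
          · exfalso; rw [← h'] at hqi; linarith [hgap k]
          · exact h'
        have hHR := HR i (gp k) (Or.inr ⟨k, hik'.le, rfl⟩) (le_of_eq hqi)
        have := mul_pos hτ (show (0:ℝ) < gq i - gp i by linarith [hgap i])
        linarith [hqi]
      -- the set of crossing intervals
      set LX := L.filter (fun v => v.1 < gp k ∧ gq k < v.2) with hLX_def
      set Lleft := L.filter (fun v => v.2 ≤ gq k) with hLleft_def
      have hLXsub : LX ⊆ L := Finset.filter_subset _ _
      have hLlsub : Lleft ⊆ L := Finset.filter_subset _ _
      have hdisj_lX : Disjoint Lleft LX := by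
        rw [Finset.disjoint_left]
        intro v hv1 hv2
        have h1 := (Finset.mem_filter.mp hv1).2
        have h2 := (Finset.mem_filter.mp hv2).2
        linarith [h2.2]
      by_cases hLXne : LX.Nonempty
      · -- CASE A : some interval crosses the chosen gap
        set Lright := L.filter (fun v => ¬ v.2 ≤ gq k ∧ ¬ v.1 < gp k) with hLright_def
        have hLrsub : Lright ⊆ L := Finset.filter_subset _ _
        have hdisj_lr : Disjoint Lleft Lright := by
          rw [Finset.disjoint_left]
          intro v hv1 hv2
          exact ((Finset.mem_filter.mp hv2).2).1 (Finset.mem_filter.mp hv1).2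
        have hdisj_rX : Disjoint Lright LX := by
          rw [Finset.disjoint_left]
          intro v hv1 hv2
          exact ((Finset.mem_filter.mp hv1).2).2 (Finset.mem_filter.mp hv2).2.1
        have hcard3 : Lleft.card + Lright.card + LX.card ≤ L.card := by
          have h1 : (Lleft ∪ Lright) ∪ LX ⊆ L := by
            intro v hv
            rcases Finset.mem_union.mp hv with h | h
            · rcases Finset.mem_union.mp h with h' | h'
              · exact hLlsub h'
              · exact hLrsub h'
            · exact hLXsub h
          calc Lleft.card + Lright.card + LX.card
              = ((Lleft ∪ Lright) ∪ LX).card := by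
                rw [Finset.card_union_of_disjoint, Finset.card_union_of_disjoint hdisj_lr]
                exact Finset.disjoint_union_left.mpr ⟨hdisj_lX, hdisj_rX⟩
            _ ≤ L.card := Finset.card_le_card h1
        have hLX1 : 1 ≤ LX.card := Finset.card_pos.mpr hLXne
        -- extremal crossing intervals
        have hne1 : (LX.image Prod.fst).Nonempty := hLXne.image _
        have hne2 : (LX.image Prod.snd).Nonempty := hLXne.image _
        set vmin := (LX.image Prod.fst).min' hne1 with hvmin_def
        set vmax := (LX.image Prod.snd).max' hne2 with hvmax_def
        obtain ⟨v₁, hv₁X, hv₁e⟩ := Finset.mem_image.mp ((LX.image Prod.fst).min'_mem hne1)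
        obtain ⟨v₂, hv₂X, hv₂e⟩ := Finset.mem_image.mp ((LX.image Prod.snd).max'_mem hne2)
        rw [← hvmin_def] at hv₁e
        rw [← hvmax_def] at hv₂e
        have hv₁f := (Finset.mem_filter.mp hv₁X).2
        have hv₂f := (Finset.mem_filter.mp hv₂X).2
        set mL := gp k - vmin with hmL_def
        set mR := vmax - gq k with hmR_def
        have hmL0 : 0 < mL := by rw [hmL_def, ← hv₁e]; linarith [hv₁f.1]
        have hmR0 : 0 < mR := by rw [hmR_def, ← hv₂e]; linarith [hv₂f.2]
        have hvminle : ∀ v ∈ LX, vmin ≤ v.1 :=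
          fun v hv => Finset.min'_le _ _ (Finset.mem_image_of_mem _ hv)
        have hvmaxge : ∀ v ∈ LX, v.2 ≤ vmax :=
          fun v hv => Finset.le_max' _ _ (Finset.mem_image_of_mem _ hv)
        have hvminp : vmin < gp k := by rw [← hv₁e]; exact hv₁f.1
        have hvmaxq : gq k < vmax := by rw [← hv₂e]; exact hv₂f.2
        -- measure bookkeeping
        have hmeasL : 3 * Lleft.card + (if 0 < ℓ then 1 else 0) + (if 0 < mL then 1 else 0)
            ≤ N := by
          have e1 : (if 0 < ℓ then 1 else 0) ≤ 1 := by split_ifs <;> omega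
          have e2 : (if 0 < mL then 1 else 0) ≤ 1 := by split_ifs <;> omega
          have e3 : 0 ≤ (if 0 < m then 1 else 0) := Nat.zero_le _
          omega
        have hmeasR : 3 * Lright.card + (if 0 < mR then 1 else 0) + (if 0 < m then 1 else 0)
            ≤ N := by
          have e1 : (if 0 < mR then 1 else 0) ≤ 1 := by split_ifs <;> omega
          have e3 : 0 ≤ (if 0 < ℓ then 1 else 0) := Nat.zero_le _
          have e2 : (if 0 < m then 1 else 0) ≤ 1 := by split_ifs <;> omega
          omega
        -- left recursive call
        have hcovL : C ∩ Ioo (α + ℓ) (gp k - mL) ⊆ ⋃ v ∈ Lleft, Ioo v.1 v.2 := by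
          intro x hx
          have hxv : x < vmin := by
            have : gp k - mL = vmin := by rw [hmL_def]; ring
            rw [this] at hx
            exact hx.2.2
          have hxreg : x ∈ C ∩ Ioo (α + ℓ) (β - m) :=
            ⟨hx.1, hx.2.1, by linarith [hvminp]⟩
          obtain ⟨v, hvL, hvx⟩ := Set.mem_iUnion₂.mp (hLcov hxreg)
          rcases le_or_gt v.2 (gq k) with hc | hc
          · exact Set.mem_iUnion₂.mpr ⟨v, Finset.mem_filter.mpr ⟨hvL, hc⟩, hvx⟩
          · exfalso
            rcases lt_or_ge v.1 (gp k) with hd | hd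
            · have hvX : v ∈ LX := Finset.mem_filter.mpr ⟨hvL, hd, hc⟩
              have := hvminle v hvX
              linarith [hvx.1]
            · linarith [hvx.1, hvminp]
        have hIHL := ih Lleft (k + 1) α (gp k) ℓ mL hmeasL haα (by linarith) hαC (hpC k)
          hαp hℓ hmL0.le hbLL hbRp (hinvL mL hmL0.le)
          (fun v hv => hLgood v (hLlsub hv)) hcovL
        -- right recursive call
        have hcovR : C ∩ Ioo (gq k + mR) (β - m) ⊆ ⋃ v ∈ Lright, Ioo v.1 v.2 := by
          intro x hx
          have hxv : vmax < x := by
            have : gq k + mR = vmax := by rw [hmR_def]; ring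
            rw [this] at hx
            exact hx.2.1
          have hxreg : x ∈ C ∩ Ioo (α + ℓ) (β - m) :=
            ⟨hx.1, by linarith [hvmaxq], hx.2.2⟩
          obtain ⟨v, hvL, hvx⟩ := Set.mem_iUnion₂.mp (hLcov hxreg)
          rcases le_or_gt v.2 (gq k) with hc | hc
          · exfalso; linarith [hvx.2, hvmaxq]
          · rcases lt_or_ge v.1 (gp k) with hd | hd
            · exfalso
              have hvX : v ∈ LX := Finset.mem_filter.mpr ⟨hvL, hd, hc⟩
              have := hvmaxge v hvX
              linarith [hvx.2]
            · exact Set.mem_iUnion₂.mpr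
                ⟨v, Finset.mem_filter.mpr ⟨hvL, not_le.mpr hc, not_lt.mpr hd⟩, hvx⟩
        have hIHR := ih Lright (k + 1) (gq k) β mR m hmeasR (by linarith) hβb (hqC k) hβC
          hqβ hmR0.le hm hbLq hbRR (hinvR mR hmR0.le)
          (fun v hv => hLgood v (hLrsub hv)) hcovR
        -- the crossing intervals pay for the overhangs
        have hXpay : mL ^ s + mR ^ s ≤ 2 * ∑ v ∈ LX, (v.2 - v.1) ^ s := by
          have hlen1 : mL ≤ v₁.2 - v₁.1 := by
            rw [hmL_def, ← hv₁e]; linarith [hv₁f.2, hgap k]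
          have hlen2 : mR ≤ v₂.2 - v₂.1 := by
            rw [hmR_def, ← hv₂e]; linarith [hv₂f.1, hgap k]
          have hXnn : 0 ≤ ∑ v ∈ LX, (v.2 - v.1) ^ s := hsum_nonneg LX hLXsub
          have h1 : mL ^ s ≤ (v₁.2 - v₁.1) ^ s := Real.rpow_le_rpow hmL0.le hlen1 hs0.le
          have h2 : mR ^ s ≤ (v₂.2 - v₂.1) ^ s := Real.rpow_le_rpow hmR0.le hlen2 hs0.le
          have hnn : ∀ v ∈ LX, 0 ≤ (v.2 - v.1) ^ s := fun v hv =>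
            Real.rpow_nonneg (by linarith [hLgood v (hLXsub hv)]) s
          by_cases h12 : v₁ = v₂
          · have h3 : (v₁.2 - v₁.1) ^ s ≤ ∑ v ∈ LX, (v.2 - v.1) ^ s :=
              Finset.single_le_sum hnn hv₁X
            rw [← h12] at h2
            linarith
          · have h3 : (v₁.2 - v₁.1) ^ s + (v₂.2 - v₂.1) ^ s ≤ ∑ v ∈ LX, (v.2 - v.1) ^ s := by
              have hpair : ({v₁, v₂} : Finset (ℝ × ℝ)) ⊆ LX := by
                intro v hv
                rcases Finset.mem_insert.mp hv with h | h
                · rwa [h]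
                · rw [Finset.mem_singleton.mp h]; exact hv₂X
              calc (v₁.2 - v₁.1) ^ s + (v₂.2 - v₂.1) ^ s
                  = ∑ v ∈ ({v₁, v₂} : Finset (ℝ × ℝ)), (v.2 - v.1) ^ s :=
                    (Finset.sum_pair (f := fun v : ℝ × ℝ => (v.2 - v.1) ^ s) h12).symm
                _ ≤ _ := Finset.sum_le_sum_of_subset_of_nonneg hpair
                    (fun v hv _ => hnn v hv)
            linarith [hXnn]
        -- combine
        have hsplit : ∑ v ∈ Lleft, (v.2 - v.1) ^ s + ∑ v ∈ Lright, (v.2 - v.1) ^ s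
            + ∑ v ∈ LX, (v.2 - v.1) ^ s ≤ ∑ v ∈ L, (v.2 - v.1) ^ s := by
          have h1 : (Lleft ∪ Lright) ∪ LX ⊆ L := by
            intro v hv
            rcases Finset.mem_union.mp hv with h | h
            · rcases Finset.mem_union.mp h with h' | h'
              · exact hLlsub h'
              · exact hLrsub h'
            · exact hLXsub h
          calc ∑ v ∈ Lleft, (v.2 - v.1) ^ s + ∑ v ∈ Lright, (v.2 - v.1) ^ s
              + ∑ v ∈ LX, (v.2 - v.1) ^ s
              = ∑ v ∈ (Lleft ∪ Lright) ∪ LX, (v.2 - v.1) ^ s := by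
                rw [Finset.sum_union (Finset.disjoint_union_left.mpr ⟨hdisj_lX, hdisj_rX⟩),
                  Finset.sum_union hdisj_lr]
            _ ≤ _ := Finset.sum_le_sum_of_subset_of_nonneg h1 (fun v hv _ =>
                Real.rpow_nonneg (by linarith [hLgood v hv]) s)
        linarith [hkey, hIHL, hIHR, hXpay, hsplit]
      · -- no crossing interval
        have hLXe : LX = ∅ := Finset.not_nonempty_iff_eq_empty.mp hLXne
        by_cases hB : β - m ≤ gq k
        · -- CASE B : the right allowance swallows the gap and the right bridge
          have hm0 : 0 < m := by linarith
          have hQm : β - gq k ≤ m := by linarith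
          have hmeas : 3 * L.card + (if 0 < ℓ then 1 else 0) + (if 0 < (0:ℝ) then 1 else 0)
              ≤ N := by
            have e2 : (if 0 < m then 1 else 0) = 1 := if_pos hm0
            have e3 : (if 0 < (0:ℝ) then 1 else 0) = 0 := if_neg (lt_irrefl _)
            omega
          have hcovB : C ∩ Ioo (α + ℓ) (gp k - 0) ⊆ ⋃ v ∈ L, Ioo v.1 v.2 := by
            intro x hx
            rw [sub_zero] at hx
            exact hLcov ⟨hx.1, hx.2.1, by linarith [hx.2.2]⟩
          have hIHL := ih L (k + 1) α (gp k) ℓ 0 hmeas haα (by linarith) hαC (hpC k)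
            hαp hℓ (le_refl 0) hbLL hbRp (hinvL 0 (le_refl 0)) hLgood hcovB
          rw [Real.zero_rpow hs0.ne'] at hIHL
          have hQs : (β - gq k) ^ s ≤ m ^ s :=
            Real.rpow_le_rpow (by linarith) hQm hs0.le
          linarith [hkey, hIHL, hQs]
        · push_neg at hB
          by_cases hCc : gp k ≤ α + ℓ
          · -- CASE C : the left allowance swallows the gap and the left bridge
            have hℓ0 : 0 < ℓ := by linarith
            have hPl : gp k - α ≤ ℓ := by linarith
            have hmeas : 3 * L.card + (if 0 < (0:ℝ) then 1 else 0) + (if 0 < m then 1 else 0)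
                ≤ N := by
              have e2 : (if 0 < ℓ then 1 else 0) = 1 := if_pos hℓ0
              have e3 : (if 0 < (0:ℝ) then 1 else 0) = 0 := if_neg (lt_irrefl _)
              omega
            have hcovC : C ∩ Ioo (gq k + 0) (β - m) ⊆ ⋃ v ∈ L, Ioo v.1 v.2 := by
              intro x hx
              rw [add_zero] at hx
              exact hLcov ⟨hx.1, by linarith [hx.2.1], hx.2.2⟩
            have hIHR := ih L (k + 1) (gq k) β 0 m hmeas (by linarith) hβb (hqC k) hβC
              hqβ (le_refl 0) hm hbLq hbRR (hinvR 0 (le_refl 0)) hLgood hcovC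
            rw [Real.zero_rpow hs0.ne'] at hIHR
            have hPs : (gp k - α) ^ s ≤ ℓ ^ s :=
              Real.rpow_le_rpow (by linarith) hPl hs0.le
            linarith [hkey, hIHR, hPs]
          · -- CASE D : genuine split, both sides are nonempty
            push_neg at hCc
            set Lright := L.filter (fun v => ¬ v.2 ≤ gq k) with hLright_def
            have hLrsub : Lright ⊆ L := Finset.filter_subset _ _
            -- every non-left interval starts after the gap
            have hright_ge : ∀ v ∈ Lright, gp k ≤ v.1 := by
              intro v hv
              have hv' := Finset.mem_filter.mp hv
              by_contra hcon
              push_neg at hcon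
              have : v ∈ LX := Finset.mem_filter.mpr ⟨hv'.1, hcon, not_le.mp hv'.2⟩
              rw [hLXe] at this
              exact absurd this (Finset.notMem_empty v)
            -- both families are nonempty
            obtain ⟨xL, hxLC, hxL⟩ := hadjL hCc
            obtain ⟨xR, hxRC, hxR⟩ := hadjR hB
            have hLlne : Lleft.Nonempty := by
              have hxreg : xL ∈ C ∩ Ioo (α + ℓ) (β - m) :=
                ⟨hxLC, hxL.1, by linarith [hxL.2]⟩
              obtain ⟨v, hvL, hvx⟩ := Set.mem_iUnion₂.mp (hLcov hxreg)
              refine ⟨v, Finset.mem_filter.mpr ⟨hvL, ?_⟩⟩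
              by_contra hcon
              have hvr : v ∈ Lright := Finset.mem_filter.mpr ⟨hvL, hcon⟩
              have := hright_ge v hvr
              linarith [hvx.1, hxL.2]
            have hLrne : Lright.Nonempty := by
              have hxreg : xR ∈ C ∩ Ioo (α + ℓ) (β - m) :=
                ⟨hxRC, by linarith [hxR.1], hxR.2⟩
              obtain ⟨v, hvL, hvx⟩ := Set.mem_iUnion₂.mp (hLcov hxreg)
              refine ⟨v, Finset.mem_filter.mpr ⟨hvL, ?_⟩⟩
              intro hcon
              linarith [hvx.2, hxR.1]
            have hcardsplit : Lleft.card + Lright.card = L.card := by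
              rw [hLleft_def, hLright_def]
              exact Finset.card_filter_add_card_filter_not _
            have hLl1 : 1 ≤ Lleft.card := Finset.card_pos.mpr hLlne
            have hLr1 : 1 ≤ Lright.card := Finset.card_pos.mpr hLrne
            have hmeasL : 3 * Lleft.card + (if 0 < ℓ then 1 else 0)
                + (if 0 < (0:ℝ) then 1 else 0) ≤ N := by
              have e1 : (if 0 < ℓ then 1 else 0) ≤ 1 := by split_ifs <;> omega
              have e3 : (if 0 < (0:ℝ) then 1 else 0) = 0 := if_neg (lt_irrefl _)
              have e4 : 0 ≤ (if 0 < m then 1 else 0) := Nat.zero_le _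
              omega
            have hmeasR : 3 * Lright.card + (if 0 < (0:ℝ) then 1 else 0)
                + (if 0 < m then 1 else 0) ≤ N := by
              have e1 : (if 0 < m then 1 else 0) ≤ 1 := by split_ifs <;> omega
              have e3 : (if 0 < (0:ℝ) then 1 else 0) = 0 := if_neg (lt_irrefl _)
              have e4 : 0 ≤ (if 0 < ℓ then 1 else 0) := Nat.zero_le _
              omega
            have hcovL : C ∩ Ioo (α + ℓ) (gp k - 0) ⊆ ⋃ v ∈ Lleft, Ioo v.1 v.2 := by
              intro x hx
              rw [sub_zero] at hx
              have hxreg : x ∈ C ∩ Ioo (α + ℓ) (β - m) :=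
                ⟨hx.1, hx.2.1, by linarith [hx.2.2]⟩
              obtain ⟨v, hvL, hvx⟩ := Set.mem_iUnion₂.mp (hLcov hxreg)
              rcases le_or_gt v.2 (gq k) with hc | hc
              · exact Set.mem_iUnion₂.mpr ⟨v, Finset.mem_filter.mpr ⟨hvL, hc⟩, hvx⟩
              · exfalso
                have hvr : v ∈ Lright := Finset.mem_filter.mpr ⟨hvL, not_le.mpr hc⟩
                have := hright_ge v hvr
                linarith [hvx.1, hx.2.2]
            have hcovR : C ∩ Ioo (gq k + 0) (β - m) ⊆ ⋃ v ∈ Lright, Ioo v.1 v.2 := by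
              intro x hx
              rw [add_zero] at hx
              have hxreg : x ∈ C ∩ Ioo (α + ℓ) (β - m) :=
                ⟨hx.1, by linarith [hx.2.1], hx.2.2⟩
              obtain ⟨v, hvL, hvx⟩ := Set.mem_iUnion₂.mp (hLcov hxreg)
              rcases le_or_gt v.2 (gq k) with hc | hc
              · exfalso; linarith [hvx.2, hx.2.1]
              · exact Set.mem_iUnion₂.mpr ⟨v, Finset.mem_filter.mpr ⟨hvL, not_le.mpr hc⟩, hvx⟩
            have hIHL := ih Lleft (k + 1) α (gp k) ℓ 0 hmeasL haα (by linarith) hαC (hpC k)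
              hαp hℓ (le_refl 0) hbLL hbRp (hinvL 0 (le_refl 0))
              (fun v hv => hLgood v (hLlsub hv)) hcovL
            have hIHR := ih Lright (k + 1) (gq k) β 0 m hmeasR (by linarith) hβb (hqC k) hβC
              hqβ (le_refl 0) hm hbLq hbRR (hinvR 0 (le_refl 0))
              (fun v hv => hLgood v (hLrsub hv)) hcovR
            rw [Real.zero_rpow hs0.ne'] at hIHL hIHR
            have hsplit : ∑ v ∈ Lleft, (v.2 - v.1) ^ s + ∑ v ∈ Lright, (v.2 - v.1) ^ s
                = ∑ v ∈ L, (v.2 - v.1) ^ s := by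
              rw [hLleft_def, hLright_def]
              exact Finset.sum_filter_add_sum_filter_not _ _ _
            linarith [hkey, hIHL, hIHR]
end FSsection

lemma sum_image_le' {F : Finset ℕ} (g : ℕ → ℝ × ℝ) (f : ℝ × ℝ → ℝ)
    (hf : ∀ n ∈ F, 0 ≤ f (g n)) : ∑ v ∈ F.image g, f v ≤ ∑ n ∈ F, f (g n) := by
  classical
  induction F using Finset.induction with
  | empty => simp
  | insert a Fs hnotmem ih =>
    rw [Finset.image_insert, Finset.sum_insert hnotmem]
    have hfa := hf a (Finset.mem_insert_self a Fs)
    have ih' := ih (fun n hn => hf n (Finset.mem_insert_of_mem hn))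
    by_cases hmem : g a ∈ Fs.image g
    · rw [Finset.insert_eq_self.mpr hmem]
      linarith
    · rw [Finset.sum_insert hmem]
      linarith


end Auxiliary

/-- thickness bound on the Hausdorff dimension. Let `C ⊂ ℝ` be a Cantor set
(compact, perfect, totally disconnected) and `τ > 0`. If there is a presentation
`U : ℕ → Set ℝ` (an enumeration of the gaps of `C`) such that for every gap `U k` and every
boundary point `u ∈ C` of it, the bridge (the connected component of
`I ∖ (U 0 ∪ ⋯ ∪ U k)` containing `u`) has diameter at least `τ` times the diameter of the
gap, then `dim_H C ≥ log 2 / log (2 + 1/τ)`. -/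
theorem stmt14 (C : Set ℝ) (hC : IsCompact C) (hperf : Perfect C)
    (htd : IsTotallyDisconnected C) (τ : ℝ) (hτ : 0 < τ)
    (U : ℕ → Set ℝ) (hUinj : Function.Injective U)
    (hUgap : ∀ n, U n ∈ gapSet C) (hUsurj : ∀ G ∈ gapSet C, ∃ n, U n = G)
    (hratio : ∀ k : ℕ, ∀ u ∈ frontier (U k) ∩ C,
      τ * Metric.diam (U k) ≤
        Metric.diam (connectedComponentIn
          (Icc (sInf C) (sSup C) \ ⋃ i ∈ Finset.range (k + 1), U i) u)) :
    ENNReal.ofReal (Real.log 2 / Real.log (2 + 1 / τ)) ≤ dimH C := by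
  simp only [gapSet, mem_setOf_eq] at hUgap
  by_cases hCne : C.Nonempty
  swap
  · -- C is empty : contradiction with injectivity
    exfalso
    rw [Set.not_nonempty_iff_eq_empty] at hCne
    subst hCne
    have h0 : Icc (sInf (∅ : Set ℝ)) (sSup (∅ : Set ℝ)) \ (∅ : Set ℝ) = {0} := by
      rw [Real.sInf_empty, Real.sSup_empty]
      simp
    have hgs : ∀ n, U n = {0} := by
      intro n
      obtain ⟨x, hx, he⟩ := hUgap n
      rw [h0] at hx he
      rw [mem_singleton_iff] at hx
      subst hx
      rw [he]
      apply subset_antisymm (connectedComponentIn_subset _ _)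
      exact isPreconnected_singleton.subset_connectedComponentIn rfl (subset_refl _)
    exact absurd (hUinj ((hgs 0).trans (hgs 1).symm)) (by norm_num)
  · have haC : sInf C ∈ C := hC.sInf_mem hCne
    have hbC : sSup C ∈ C := hC.sSup_mem hCne
    have hCsub : C ⊆ Icc (sInf C) (sSup C) := fun x hx =>
      ⟨csInf_le hC.bddBelow hx, le_csSup hC.bddAbove hx⟩
    rcases eq_or_lt_of_le (csInf_le hC.bddBelow hbC : sInf C ≤ sSup C) with hab | hab
    · -- degenerate : C is a single point, no gaps at all
      exfalso
      have hsing : Icc (sInf C) (sSup C) \ C = ∅ := by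
        rw [← hab, Icc_self]
        apply diff_eq_empty.mpr
        simpa using haC
      obtain ⟨x, hx, -⟩ := hUgap 0
      rw [hsing] at hx
      exact hx
    · -- main case
      set F : Set ℝ := Icc (sInf C) (sSup C) \ C with hF_def
      have hFeq : F = Ioo (sInf C) (sSup C) ∩ Cᶜ := by
        ext x
        constructor
        · rintro ⟨⟨h1, h2⟩, h3⟩
          exact ⟨⟨lt_of_le_of_ne h1 (by rintro rfl; exact h3 haC),
                 lt_of_le_of_ne h2 (by rintro rfl; exact h3 hbC)⟩, h3⟩
        · rintro ⟨h1, h2⟩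
          exact ⟨⟨h1.1.le, h1.2.le⟩, h2⟩
      have hFopen : IsOpen F := by
        rw [hFeq]
        exact isOpen_Ioo.inter hC.isClosed.isOpen_compl
      -- basic facts about each gap
      have hUfacts : ∀ n, U n = Ioo (sInf (U n)) (sSup (U n)) ∧ sInf (U n) < sSup (U n) := by
        intro n
        obtain ⟨x, hxF, hUeq⟩ := hUgap n
        have hUsubF : U n ⊆ F := by rw [hUeq]; exact connectedComponentIn_subset F x
        have hxU : x ∈ U n := by rw [hUeq]; exact mem_connectedComponentIn hxF
        have hUopen : IsOpen (U n) := by rw [hUeq]; exact hFopen.connectedComponentIn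
        have hUconn : IsPreconnected (U n) := by rw [hUeq]; exact isPreconnected_connectedComponentIn
        have hUne : (U n).Nonempty := ⟨x, hxU⟩
        have hUIcc : U n ⊆ Icc (sInf C) (sSup C) := hUsubF.trans diff_subset
        have hUbd : Bornology.IsBounded (U n) := (Metric.isBounded_Icc _ _).subset hUIcc
        have hinfsup : sInf (U n) ≤ sSup (U n) := Real.sInf_le_sSup _ hUbd.bddBelow hUbd.bddAbove
        have hno_inf : sInf (U n) ∉ U n := by
          intro h
          obtain ⟨ε, hε, hball⟩ := Metric.isOpen_iff.mp hUopen _ h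
          have : sInf (U n) - ε / 2 ∈ U n := by
            apply hball
            rw [Metric.mem_ball, Real.dist_eq,
              show sInf (U n) - ε / 2 - sInf (U n) = -(ε / 2) by ring, abs_neg,
              abs_of_nonneg (by linarith)]
            linarith
          have := csInf_le hUbd.bddBelow this
          linarith
        have hno_sup : sSup (U n) ∉ U n := by
          intro h
          obtain ⟨ε, hε, hball⟩ := Metric.isOpen_iff.mp hUopen _ h
          have : sSup (U n) + ε / 2 ∈ U n := by
            apply hball
            rw [Metric.mem_ball, Real.dist_eq,
              show sSup (U n) + ε / 2 - sSup (U n) = ε / 2 by ring,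
              abs_of_nonneg (by linarith)]
            linarith
          have := le_csSup hUbd.bddAbove this
          linarith
        have hmem := hUconn.mem_intervals
        simp only [mem_insert_iff, mem_singleton_iff] at hmem
        -- rule out unbounded and closed-end cases
        have houtside : ∀ y : ℝ, y ∈ U n → sInf C ≤ y ∧ y ≤ sSup C := fun y hy =>
          ⟨(hUIcc hy).1, (hUIcc hy).2⟩
        have hix := csInf_le hUbd.bddBelow hxU
        have hsx := le_csSup hUbd.bddAbove hxU
        have hxb := houtside x hxU
        rcases hmem with h | h | h | h | h | h | h | h | h | h
        · exfalso; apply hno_inf; rw [h, csInf_Icc hinfsup]; exact left_mem_Icc.mpr hinfsup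
        · exfalso
          have h2 : (Ico (sInf (U n)) (sSup (U n))).Nonempty := h ▸ hUne
          apply hno_inf; rw [h, csInf_Ico (nonempty_Ico.mp h2)]
          exact left_mem_Ico.mpr (nonempty_Ico.mp h2)
        · exfalso
          have h2 : (Ioc (sInf (U n)) (sSup (U n))).Nonempty := h ▸ hUne
          apply hno_sup; rw [h, csSup_Ioc (nonempty_Ioc.mp h2)]
          exact right_mem_Ioc.mpr (nonempty_Ioc.mp h2)
        · have h2 : (Ioo (sInf (U n)) (sSup (U n))).Nonempty := h ▸ hUne
          exact ⟨h, nonempty_Ioo.mp h2⟩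
        · exfalso
          have hmem2 : sSup C + 1 ∈ U n := by rw [h]; exact mem_Ici.mpr (by linarith)
          linarith [(houtside _ hmem2).2]
        · exfalso
          have hmem2 : sSup C + 1 ∈ U n := by rw [h]; exact mem_Ioi.mpr (by linarith)
          linarith [(houtside _ hmem2).2]
        · exfalso
          have hmem2 : sInf C - 1 ∈ U n := by rw [h]; exact mem_Iic.mpr (by linarith)
          linarith [(houtside _ hmem2).1]
        · exfalso
          have hmem2 : sInf C - 1 ∈ U n := by rw [h]; exact mem_Iio.mpr (by linarith)
          linarith [(houtside _ hmem2).1]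
        · exfalso
          have hmem2 : sInf C - 1 ∈ U n := by rw [h]; trivial
          linarith [(houtside _ hmem2).1]
        · exfalso; rw [h] at hUne; exact Set.not_nonempty_empty hUne
      set gp : ℕ → ℝ := fun n => sInf (U n) with hgp_def
      set gq : ℕ → ℝ := fun n => sSup (U n) with hgq_def
      have hUIoo : ∀ n, U n = Ioo (gp n) (gq n) := fun n => (hUfacts n).1
      have hglt : ∀ n, gp n < gq n := fun n => (hUfacts n).2
      have hUne : ∀ n, (U n).Nonempty := fun n => by
        rw [hUIoo n]; exact nonempty_Ioo.mpr (hglt n)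
      have hUsubF : ∀ n, U n ⊆ F := by
        intro n
        obtain ⟨x, hxF, hUeq⟩ := hUgap n
        rw [hUeq]; exact connectedComponentIn_subset F x
      have hgapC : ∀ n, Ioo (gp n) (gq n) ∩ C = ∅ := by
        intro n
        rw [← hUIoo n, eq_empty_iff_forall_notMem]
        rintro x ⟨hx1, hx2⟩
        exact (hUsubF n hx1).2 hx2
      have hUIcc : ∀ n, U n ⊆ Icc (sInf C) (sSup C) := fun n => (hUsubF n).trans diff_subset
      have hga : ∀ n, sInf C ≤ gp n ∧ gq n ≤ sSup C := by
        intro n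
        constructor
        · exact le_csInf (hUne n) (fun y hy => (hUIcc n hy).1)
        · exact csSup_le (hUne n) (fun y hy => (hUIcc n hy).2)
      have hpqC : ∀ n, gp n ∈ C ∧ gq n ∈ C := by
        intro n
        obtain ⟨x, hxF, hUeq⟩ := hUgap n
        have hxU : x ∈ U n := by rw [hUeq]; exact mem_connectedComponentIn hxF
        constructor
        · by_contra hnC
          have hpF : gp n ∈ F :=
            ⟨⟨(hga n).1, by linarith [(hga n).2, hglt n]⟩, hnC⟩
          have hIco : Ico (gp n) (gq n) ⊆ connectedComponentIn F (gp n) := by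
            apply isPreconnected_Ico.subset_connectedComponentIn
              (left_mem_Ico.mpr (hglt n))
            intro y hy
            rcases eq_or_lt_of_le hy.1 with h | h
            · rwa [← h]
            · exact hUsubF n (by rw [hUIoo n]; exact ⟨h, hy.2⟩)
          have hxW : x ∈ connectedComponentIn F (gp n) := by
            apply hIco
            rw [hUIoo n] at hxU
            exact ⟨hxU.1.le, hxU.2⟩
          have hWU : connectedComponentIn F (gp n) = U n := by
            rw [connectedComponentIn_eq hxW, ← hUeq]
          have hmem : gp n ∈ U n := by
            rw [← hWU]
            exact mem_connectedComponentIn hpF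
          rw [hUIoo n] at hmem
          exact lt_irrefl _ hmem.1
        · by_contra hnC
          have hpF : gq n ∈ F :=
            ⟨⟨by linarith [(hga n).1, hglt n], (hga n).2⟩, hnC⟩
          have hIoc : Ioc (gp n) (gq n) ⊆ connectedComponentIn F (gq n) := by
            apply isPreconnected_Ioc.subset_connectedComponentIn
              (right_mem_Ioc.mpr (hglt n))
            intro y hy
            rcases eq_or_lt_of_le hy.2 with h | h
            · rwa [h]
            · exact hUsubF n (by rw [hUIoo n]; exact ⟨hy.1, h⟩)
          have hxW : x ∈ connectedComponentIn F (gq n) := by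
            apply hIoc
            rw [hUIoo n] at hxU
            exact ⟨hxU.1, hxU.2.le⟩
          have hWU : connectedComponentIn F (gq n) = U n := by
            rw [connectedComponentIn_eq hxW, ← hUeq]
          have hmem : gq n ∈ U n := by
            rw [← hWU]
            exact mem_connectedComponentIn hpF
          rw [hUIoo n] at hmem
          exact lt_irrefl _ hmem.2
      have hcov : ∀ x ∈ Icc (sInf C) (sSup C), x ∉ C → ∃ k, x ∈ Ioo (gp k) (gq k) := by
        intro x hx hnC
        have hxF : x ∈ F := ⟨hx, hnC⟩
        obtain ⟨n, hn⟩ := hUsurj (connectedComponentIn F x) ⟨x, hxF, rfl⟩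
        refine ⟨n, ?_⟩
        rw [← hUIoo n, hn]
        exact mem_connectedComponentIn hxF
      have hnoC : ∀ x y : ℝ, x < y → sInf C ≤ x → y ≤ sSup C →
          ∃ z, z ∈ Ioo x y ∧ z ∉ C := by
        intro x y hxy hax hyb
        by_contra h
        push_neg at h
        have hsub : Ioo x y ⊆ C := fun z hz => h z hz
        have hss := htd (Ioo x y) hsub isPreconnected_Ioo
        have h1 : (2*x + y)/3 ∈ Ioo x y := ⟨by linarith, by linarith⟩
        have h2 : (x + 2*y)/3 ∈ Ioo x y := ⟨by linarith, by linarith⟩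
        have := hss h1 h2
        linarith
      -- the two thickness estimates
      have HL : ∀ t : ℕ, ∀ α : ℝ, (α = sInf C ∨ ∃ i ≤ t, α = gq i) → α ≤ gp t →
          τ * (gq t - gp t) ≤ gp t - α := by
        intro t α hblock hαp
        have hfr : gp t ∈ frontier (U t) ∩ C := by
          refine ⟨?_, (hpqC t).1⟩
          rw [hUIoo t, frontier_Ioo (hglt t)]
          exact Or.inl rfl
        have hdiam : Metric.diam (U t) = gq t - gp t := by
          rw [hUIoo t]; exact Real.diam_Ioo (hglt t).le
        have hr := hratio t (gp t) hfr
        rw [hdiam] at hr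
        have hgpS : gp t ∈ Icc (sInf C) (sSup C) \ ⋃ i ∈ Finset.range (t + 1), U i := by
          refine ⟨⟨(hga t).1, by linarith [(hga t).2, hglt t]⟩, ?_⟩
          intro hmem
          simp only [mem_iUnion] at hmem
          obtain ⟨i, hi, hmemi⟩ := hmem
          rw [hUIoo i] at hmemi
          have hbad : gp t ∈ Ioo (gp i) (gq i) ∩ C := ⟨hmemi, (hpqC t).1⟩
          rw [hgapC i] at hbad
          exact hbad
        have hKconn : IsPreconnected (connectedComponentIn
            (Icc (sInf C) (sSup C) \ ⋃ i ∈ Finset.range (t + 1), U i) (gp t)) :=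
          isPreconnected_connectedComponentIn
        have hKS := connectedComponentIn_subset
          (Icc (sInf C) (sSup C) \ ⋃ i ∈ Finset.range (t + 1), U i) (gp t)
        have hgpK := mem_connectedComponentIn hgpS
        have hKicc : connectedComponentIn
            (Icc (sInf C) (sSup C) \ ⋃ i ∈ Finset.range (t + 1), U i) (gp t)
            ⊆ Icc α (gp t) := by
          intro z hz
          constructor
          · by_contra hcon
            push_neg at hcon
            have hIccK := hKconn.Icc_subset hz hgpK
            rcases hblock with hbl | ⟨i, hit, hbl⟩
            · have := (hKS hz).1.1
              rw [hbl] at hcon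
              linarith
            · have hiq : gp i < gq i := hglt i
              have hbl' : gp i < α := by rw [hbl]; exact hiq
              have hmax : max z (gp i) < α := max_lt hcon hbl'
              set w := (max z (gp i) + α)/2 with hw_def
              have hw1 : gp i < w := by
                have := le_max_right z (gp i)
                simp only [hw_def]; linarith
              have hw2 : w < gq i := by rw [← hbl]; simp only [hw_def]; linarith
              have hw3 : z ≤ w := by
                have := le_max_left z (gp i)
                simp only [hw_def]; linarith
              have hw4 : w ≤ gp t := by simp only [hw_def]; linarith
              have hwK := hIccK ⟨hw3, hw4⟩
              apply (hKS hwK).2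
              simp only [mem_iUnion]
              exact ⟨i, Finset.mem_range.mpr (by omega), by rw [hUIoo i]; exact ⟨hw1, hw2⟩⟩
          · by_contra hcon
            push_neg at hcon
            have hIccK := hKconn.Icc_subset hgpK hz
            have hmin : gp t < min z (gq t) := lt_min hcon (hglt t)
            set w := (gp t + min z (gq t))/2 with hw_def
            have hw1 : gp t < w := by simp only [hw_def]; linarith
            have hw2 : w < gq t := by
              have := min_le_right z (gq t)
              simp only [hw_def]; linarith
            have hw3 : w ≤ z := by
              have := min_le_left z (gq t)
              simp only [hw_def]; linarith
            have hwK := hIccK ⟨hw1.le, hw3⟩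
            apply (hKS hwK).2
            simp only [mem_iUnion]
            exact ⟨t, Finset.mem_range.mpr (by omega), by rw [hUIoo t]; exact ⟨hw1, hw2⟩⟩
        have hdK : Metric.diam (connectedComponentIn
            (Icc (sInf C) (sSup C) \ ⋃ i ∈ Finset.range (t + 1), U i) (gp t))
            ≤ gp t - α := by
          calc Metric.diam _ ≤ Metric.diam (Icc α (gp t)) :=
                Metric.diam_mono hKicc (Metric.isBounded_Icc _ _)
            _ = gp t - α := Real.diam_Icc hαp
        linarith
      have HR : ∀ t : ℕ, ∀ β : ℝ, (β = sSup C ∨ ∃ i ≤ t, β = gp i) → gq t ≤ β →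
          τ * (gq t - gp t) ≤ β - gq t := by
        intro t β hblock hqβ
        have hfr : gq t ∈ frontier (U t) ∩ C := by
          refine ⟨?_, (hpqC t).2⟩
          rw [hUIoo t, frontier_Ioo (hglt t)]
          exact Or.inr rfl
        have hdiam : Metric.diam (U t) = gq t - gp t := by
          rw [hUIoo t]; exact Real.diam_Ioo (hglt t).le
        have hr := hratio t (gq t) hfr
        rw [hdiam] at hr
        have hgpS : gq t ∈ Icc (sInf C) (sSup C) \ ⋃ i ∈ Finset.range (t + 1), U i := by
          refine ⟨⟨by linarith [(hga t).1, hglt t], (hga t).2⟩, ?_⟩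
          intro hmem
          simp only [mem_iUnion] at hmem
          obtain ⟨i, hi, hmemi⟩ := hmem
          rw [hUIoo i] at hmemi
          have hbad : gq t ∈ Ioo (gp i) (gq i) ∩ C := ⟨hmemi, (hpqC t).2⟩
          rw [hgapC i] at hbad
          exact hbad
        have hKconn : IsPreconnected (connectedComponentIn
            (Icc (sInf C) (sSup C) \ ⋃ i ∈ Finset.range (t + 1), U i) (gq t)) :=
          isPreconnected_connectedComponentIn
        have hKS := connectedComponentIn_subset
          (Icc (sInf C) (sSup C) \ ⋃ i ∈ Finset.range (t + 1), U i) (gq t)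
        have hgpK := mem_connectedComponentIn hgpS
        have hKicc : connectedComponentIn
            (Icc (sInf C) (sSup C) \ ⋃ i ∈ Finset.range (t + 1), U i) (gq t)
            ⊆ Icc (gq t) β := by
          intro z hz
          constructor
          · by_contra hcon
            push_neg at hcon
            have hIccK := hKconn.Icc_subset hz hgpK
            have hmax : max z (gp t) < gq t := max_lt hcon (hglt t)
            set w := (max z (gp t) + gq t)/2 with hw_def
            have hw1 : gp t < w := by
              have := le_max_right z (gp t)
              simp only [hw_def]; linarith
            have hw2 : w < gq t := by simp only [hw_def]; linarith
            have hw3 : z ≤ w := by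
              have := le_max_left z (gp t)
              simp only [hw_def]; linarith
            have hwK := hIccK ⟨hw3, hw2.le⟩
            apply (hKS hwK).2
            simp only [mem_iUnion]
            exact ⟨t, Finset.mem_range.mpr (by omega), by rw [hUIoo t]; exact ⟨hw1, hw2⟩⟩
          · by_contra hcon
            push_neg at hcon
            have hIccK := hKconn.Icc_subset hgpK hz
            rcases hblock with hbl | ⟨i, hit, hbl⟩
            · have := (hKS hz).1.2
              rw [hbl] at hcon
              linarith
            · have hiq : gp i < gq i := hglt i
              have hbl' : β < gq i := by rw [hbl]; exact hiq
              have hmin : β < min z (gq i) := lt_min hcon hbl'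
              set w := (β + min z (gq i))/2 with hw_def
              have hw1 : gp i < w := by
                rw [hbl] at *
                simp only [hw_def]; linarith
              have hw2 : w < gq i := by
                have := min_le_right z (gq i)
                simp only [hw_def]; linarith
              have hw3 : w ≤ z := by
                have := min_le_left z (gq i)
                simp only [hw_def]; linarith
              have hw4 : gq t ≤ w := by simp only [hw_def]; linarith
              have hwK := hIccK ⟨hw4, hw3⟩
              apply (hKS hwK).2
              simp only [mem_iUnion]
              exact ⟨i, Finset.mem_range.mpr (by omega), by rw [hUIoo i]; exact ⟨hw1, hw2⟩⟩
        have hdK : Metric.diam (connectedComponentIn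
            (Icc (sInf C) (sSup C) \ ⋃ i ∈ Finset.range (t + 1), U i) (gq t))
            ≤ β - gq t := by
          calc Metric.diam _ ≤ Metric.diam (Icc (gq t) β) :=
                Metric.diam_mono hKicc (Metric.isBounded_Icc _ _)
            _ = β - gq t := Real.diam_Icc hqβ
        linarith
      -- the exponent
      set d : ℝ := Real.log 2 / Real.log (2 + 1/τ) with hd_def
      have hτ1 : (0:ℝ) < 1/τ := by positivity
      have hlog2 : (0:ℝ) < Real.log 2 := Real.log_pos (by norm_num)
      have hlogτ : (0:ℝ) < Real.log (2 + 1/τ) := Real.log_pos (by linarith)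
      have hd0 : 0 < d := by rw [hd_def]; positivity
      have hd1 : d < 1 := by
        rw [hd_def, div_lt_one hlogτ]
        exact Real.log_lt_log (by norm_num) (by linarith)
      have key : ∀ x y g : ℝ, 0 ≤ g → τ * g ≤ x → τ * g ≤ y →
          (x + g + y) ^ d ≤ x ^ d + y ^ d := by
        intro x y g hg hx hy
        exact key_ineq hτ hd_def hg hx hy
          (le_trans (mul_nonneg hτ.le hg) hx) (le_trans (mul_nonneg hτ.le hg) hy)
      have hFS : ∀ L : Finset (ℝ × ℝ), (∀ v ∈ L, v.1 < v.2) →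
          (C ∩ Ioo (sInf C) (sSup C) ⊆ ⋃ v ∈ L, Ioo v.1 v.2) →
          (sSup C - sInf C) ^ d ≤ 2 * ∑ v ∈ L, (v.2 - v.1) ^ d := by
        intro L hgood hcover
        have hres := FS (C := C) (a := sInf C) (b := sSup C) (gp := gp) (gq := gq)
          hτ hd0 hd1.le key hglt hgapC (fun n => (hpqC n).1) (fun n => (hpqC n).2)
          hcov hnoC HL HR (3 * L.card + 2) L 0 (sInf C) (sSup C) 0 0
          (by split_ifs <;> omega)
          le_rfl le_rfl haC hbC (le_of_lt hab) le_rfl le_rfl (Or.inl rfl) (Or.inl rfl)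
          (fun i hi => absurd hi (Nat.not_lt_zero i))
          hgood
          (by rw [add_zero, sub_zero]; exact hcover)
        rw [Real.zero_rpow hd0.ne'] at hres
        linarith
      -- lower bound for the Hausdorff measure
      have hba : 0 < sSup C - sInf C := by linarith
      have hbad : 0 < (sSup C - sInf C) ^ d := Real.rpow_pos_of_pos hba d
      set c : ℝ≥0∞ := ENNReal.ofReal ((sSup C - sInf C) ^ d / 4) with hc_def
      have hc0 : c ≠ 0 := by
        rw [hc_def]
        simp only [ne_eq, ENNReal.ofReal_eq_zero, not_le]
        positivity
      -- geometric ratio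
      set r : ℝ := (2:ℝ) ^ (-d) with hr_def
      have hr0 : 0 < r := Real.rpow_pos_of_pos (by norm_num) _
      have hr1 : r < 1 := Real.rpow_lt_one_of_one_lt_of_neg (by norm_num) (by linarith)
      set δ : ℝ := ((sSup C - sInf C) ^ d / 16 * (1 - r)) ^ (1/d) / 2 with hδ_def
      have hX : 0 < (sSup C - sInf C) ^ d / 16 * (1 - r) := by nlinarith
      have hδ0 : 0 < δ := by
        rw [hδ_def]
        positivity
      have h2δ : (2 * δ) ^ d = (sSup C - sInf C) ^ d / 16 * (1 - r) := by
        rw [hδ_def, mul_div_cancel₀ _ (two_ne_zero), ← Real.rpow_mul hX.le,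
          one_div_mul_cancel hd0.ne', Real.rpow_one]
      -- the per-cover estimate
      have hcoverbound : ∀ t : ℕ → Set ℝ, C ⊆ ⋃ n, t n →
          c ≤ ∑' n, ⨆ _ : (t n).Nonempty, EMetric.diam (t n) ^ d := by
        intro t htcov
        classical
        by_contra hS
        push_neg at hS
        set S := ∑' n, ⨆ _ : (t n).Nonempty, EMetric.diam (t n) ^ d with hS_def
        have hterm : ∀ n, (⨆ _ : (t n).Nonempty, EMetric.diam (t n) ^ d) ≤ S :=
          fun n => ENNReal.le_tsum n
        have hbnd : ∀ n, (t n).Nonempty → Bornology.IsBounded (t n) := by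
          intro n hn
          rw [Metric.isBounded_iff_ediam_ne_top]
          intro htop
          have h1 : EMetric.diam (t n) ^ d = ⊤ := by
            rw [show EMetric.diam (t n) = ⊤ from htop]
            exact ENNReal.top_rpow_of_pos hd0
          have h2 := hterm n
          rw [iSup_pos hn, h1] at h2
          have hlt : S < ⊤ := lt_of_lt_of_le hS le_top
          rw [top_le_iff.mp h2] at hlt
          exact lt_irrefl _ hlt
        set ε : ℕ → ℝ := fun n => δ * (2:ℝ) ^ (-(n:ℝ)) with hε_def
        have hε0 : ∀ n, 0 < ε n := fun n => mul_pos hδ0 (Real.rpow_pos_of_pos (by norm_num) _)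
        set O : ℕ → Set ℝ := fun n =>
          if (t n).Nonempty then Ioo (sInf (t n) - ε n) (sSup (t n) + ε n) else ∅ with hO_def
        have hOopen : ∀ n, IsOpen (O n) := by
          intro n
          rw [hO_def]
          dsimp only
          split_ifs
          · exact isOpen_Ioo
          · exact isOpen_empty
        have hOcov : C ⊆ ⋃ n, O n := by
          intro x hx
          obtain ⟨n, hn⟩ := mem_iUnion.mp (htcov hx)
          refine mem_iUnion.mpr ⟨n, ?_⟩
          have hne : (t n).Nonempty := ⟨x, hn⟩
          have hb := hbnd n hne
          rw [hO_def]
          dsimp only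
          rw [if_pos hne]
          exact ⟨by linarith [csInf_le hb.bddBelow hn, hε0 n],
                 by linarith [le_csSup hb.bddAbove hn, hε0 n]⟩
        obtain ⟨F2, hF2⟩ := hC.elim_finite_subcover O hOopen hOcov
        set F' := F2.filter (fun n => (t n).Nonempty) with hF'_def
        set gfun : ℕ → ℝ × ℝ := fun n => (sInf (t n) - ε n, sSup (t n) + ε n) with hg_def
        set L := F'.image gfun with hL_def
        have hgood : ∀ v ∈ L, v.1 < v.2 := by
          intro v hv
          obtain ⟨n, hnF, hve⟩ := Finset.mem_image.mp hv
          have hne := (Finset.mem_filter.mp hnF).2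
          have hb := hbnd n hne
          rw [← hve]
          have h1 := Real.sInf_le_sSup _ hb.bddBelow hb.bddAbove
          show (gfun n).1 < (gfun n).2
          rw [hg_def]
          dsimp only
          linarith [hε0 n]
        have hcover : C ∩ Ioo (sInf C) (sSup C) ⊆ ⋃ v ∈ L, Ioo v.1 v.2 := by
          intro x hx
          obtain ⟨n, hnF, hnO⟩ := Set.mem_iUnion₂.mp (hF2 hx.1)
          rw [hO_def] at hnO
          dsimp only at hnO
          by_cases hne : (t n).Nonempty
          · rw [if_pos hne] at hnO
            exact Set.mem_iUnion₂.mpr ⟨gfun n,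
              Finset.mem_image_of_mem _ (Finset.mem_filter.mpr ⟨hnF, hne⟩), hnO⟩
          · rw [if_neg hne] at hnO
            exact absurd hnO (notMem_empty x)
        have hmain := hFS L hgood hcover
        have hbase : ∀ n ∈ F', 0 ≤ (gfun n).2 - (gfun n).1 := by
          intro n hn
          have hne := (Finset.mem_filter.mp hn).2
          have hb := hbnd n hne
          have h1 := Real.sInf_le_sSup _ hb.bddBelow hb.bddAbove
          rw [hg_def]
          dsimp only
          linarith [hε0 n]
        have hsum1 : ∑ v ∈ L, (v.2 - v.1) ^ d ≤ ∑ n ∈ F', ((gfun n).2 - (gfun n).1) ^ d := by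
          rw [hL_def]
          exact sum_image_le' gfun (fun v => (v.2 - v.1) ^ d)
            (fun n hn => Real.rpow_nonneg (hbase n hn) d)
        have hsum2 : ∀ n ∈ F', ((gfun n).2 - (gfun n).1) ^ d
            ≤ (sSup (t n) - sInf (t n)) ^ d + (2 * ε n) ^ d := by
          intro n hn
          have hne := (Finset.mem_filter.mp hn).2
          have hb := hbnd n hne
          have h1 := Real.sInf_le_sSup _ hb.bddBelow hb.bddAbove
          have heq : (gfun n).2 - (gfun n).1 = (sSup (t n) - sInf (t n)) + 2 * ε n := by
            rw [hg_def]; dsimp only; ring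
          rw [heq]
          exact rpow_subadd hd0.le hd1.le (by linarith) (by linarith [hε0 n])
        have hsumA : ∑ n ∈ F', (sSup (t n) - sInf (t n)) ^ d < (sSup C - sInf C) ^ d / 4 := by
          have hnn : ∀ n ∈ F', 0 ≤ (sSup (t n) - sInf (t n)) ^ d := by
            intro n hn
            have hne := (Finset.mem_filter.mp hn).2
            have hb := hbnd n hne
            exact Real.rpow_nonneg
              (by linarith [Real.sInf_le_sSup _ hb.bddBelow hb.bddAbove]) d
          have hENN : ENNReal.ofReal (∑ n ∈ F', (sSup (t n) - sInf (t n)) ^ d) ≤ S := by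
            rw [ENNReal.ofReal_sum_of_nonneg hnn]
            calc ∑ n ∈ F', ENNReal.ofReal ((sSup (t n) - sInf (t n)) ^ d)
                = ∑ n ∈ F', ⨆ _ : (t n).Nonempty, EMetric.diam (t n) ^ d := by
                  apply Finset.sum_congr rfl
                  intro n hn
                  have hne := (Finset.mem_filter.mp hn).2
                  have hb := hbnd n hne
                  rw [iSup_pos hne, show EMetric.diam (t n) = Metric.ediam (t n) from rfl, Real.ediam_eq hb, ENNReal.ofReal_rpow_of_nonneg
                    (by linarith [Real.sInf_le_sSup _ hb.bddBelow hb.bddAbove]) hd0.le]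
              _ ≤ S := ENNReal.sum_le_tsum F'
          by_contra hcon
          push_neg at hcon
          have hge : c ≤ ENNReal.ofReal (∑ n ∈ F', (sSup (t n) - sInf (t n)) ^ d) := by
            rw [hc_def]
            exact ENNReal.ofReal_le_ofReal hcon
          exact lt_irrefl _ (lt_of_le_of_lt (hge.trans hENN) hS)
        have hsumE : ∑ n ∈ F', (2 * ε n) ^ d ≤ (sSup C - sInf C) ^ d / 16 := by
          have heq : ∀ n : ℕ, (2 * ε n) ^ d = (2*δ) ^ d * r ^ n := by
            intro n
            have h1 : 2 * ε n = (2*δ) * (2:ℝ) ^ (-(n:ℝ)) := by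
              rw [hε_def]; dsimp only; ring
            rw [h1, Real.mul_rpow (by linarith) (Real.rpow_nonneg (by norm_num) _)]
            congr 1
            rw [← Real.rpow_natCast r n, hr_def, ← Real.rpow_mul (by norm_num : (0:ℝ) ≤ 2),
              ← Real.rpow_mul (by norm_num : (0:ℝ) ≤ 2)]
            congr 1
            ring
          have hsummable : Summable (fun n : ℕ => r ^ n) :=
            summable_geometric_of_lt_one hr0.le hr1
          calc ∑ n ∈ F', (2 * ε n) ^ d = ∑ n ∈ F', (2*δ)^d * r ^ n :=
                Finset.sum_congr rfl (fun n _ => heq n)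
            _ = (2*δ)^d * ∑ n ∈ F', r ^ n := by rw [Finset.mul_sum]
            _ ≤ (2*δ)^d * (1 - r)⁻¹ := by
                apply mul_le_mul_of_nonneg_left _ (Real.rpow_nonneg (by linarith [hδ0]) d)
                calc ∑ n ∈ F', r ^ n ≤ ∑' n, r ^ n :=
                      hsummable.sum_le_tsum F' (fun n _ => (pow_pos hr0 n).le)
                  _ = (1 - r)⁻¹ := tsum_geometric_of_lt_one hr0.le hr1
            _ ≤ (sSup C - sInf C) ^ d / 16 := by
                rw [h2δ, mul_assoc, mul_inv_cancel₀ (by linarith : (1:ℝ) - r ≠ 0), mul_one]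
        have hdist := Finset.sum_add_distrib (s := F')
          (f := fun n => (sSup (t n) - sInf (t n)) ^ d) (g := fun n => (2 * ε n) ^ d)
        have hs2 := Finset.sum_le_sum hsum2
        linarith [hmain, hsum1, hs2, hsumA, hsumE, hbad, hdist]
      have hμ : c ≤ μH[d] C := by
        rw [MeasureTheory.Measure.hausdorffMeasure_apply]
        refine le_iSup₂_of_le 1 (by norm_num) ?_
        exact le_iInf fun t => le_iInf fun htcov => le_iInf fun _ => hcoverbound t htcov
      have hne0 : μH[((d.toNNReal : ℝ≥0) : ℝ)] C ≠ 0 := by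
        rw [Real.coe_toNNReal d hd0.le]
        intro h0
        rw [h0] at hμ
        exact hc0 (le_antisymm hμ zero_le)
      have hfin := le_dimH_of_hausdorffMeasure_ne_zero hne0
      have hco : ENNReal.ofReal d = ((d.toNNReal : ℝ≥0) : ℝ≥0∞) := rfl
      rw [hco]
      exact hfin
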